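/- arXiv:2209.02041 — 3 statements merged into one kernel-verified Lean document; each statement's English description precedes it below -/
import Mathlib

section
/- Let (X,r) be a solution and k a positive integer. Then the k-cabled data again form a solution on X: every σ^{(k)}_x and every τ^{(k)}_x is a bijection of X, and the map r^{(k)} : X × X → X × X, r^{(k)}(x,y) = (σ^{(k)}_x(y), τ^{(k)}_y(x)), satisfies r^{(k)} ∘ r^{(k)} = id and the braid relation (r^{(k)} × id) ∘ (id × r^{(k)}) ∘ (r^{(k)} × id) = (id × r^{(k)}) ∘ (r^{(k)} × id) ∘ (id × r^{(k)}). -/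
open Function

variable {X : Type*}

/-- The map `r(x,y) = (σ_x(y), τ_y(x))` built from two families of bijections. -/
def ybR (σ τ : X → Equiv.Perm X) : X × X → X × X :=
  fun p => (σ p.1 p.2, τ p.2 p.1)

/-- Apply a map `X × X → X × X` to the first two coordinates of a triple (`r × id`). -/
def lmap (r : X × X → X × X) : X × X × X → X × X × X :=
  fun p => ((r (p.1, p.2.1)).1, ((r (p.1, p.2.1)).2, p.2.2))

/-- Apply a map `X × X → X × X` to the last two coordinates of a triple (`id × r`). -/
def rmap (r : X × X → X × X) : X × X × X → X × X × X :=
  fun p => (p.1, r p.2)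

/-- A finite non-degenerate involutive set-theoretic solution of the Yang--Baxter
equation on a finite set `X` with `|X| > 1`. -/
structure YBSolution (X : Type*) [Fintype X] where
  σ : X → Equiv.Perm X
  τ : X → Equiv.Perm X
  card_gt_one : 1 < Fintype.card X
  involutive : ∀ p : X × X, ybR σ τ (ybR σ τ p) = p
  braid : lmap (ybR σ τ) ∘ rmap (ybR σ τ) ∘ lmap (ybR σ τ)
        = rmap (ybR σ τ) ∘ lmap (ybR σ τ) ∘ rmap (ybR σ τ)

namespace YBSolution

variable [Fintype X]

/-- The diagonal map `T(x) = τ_x⁻¹(x)`. -/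
def T (S : YBSolution X) (x : X) : X := (S.τ x).symm x

/-- The map `U(x) = σ_x⁻¹(x)`, the inverse of the diagonal map. -/
def U (S : YBSolution X) (x : X) : X := (S.σ x).symm x

/-- The `k`-cabled sigma maps (also denoted `π_k`):
`σ^{(k)}_x = σ_x ∘ σ_{U(x)} ∘ ⋯ ∘ σ_{U^{k-1}(x)}`. -/
def sigmaCab (S : YBSolution X) : ℕ → X → X → X
  | 0, _ => id
  | k + 1, x => ⇑(S.σ x) ∘ S.sigmaCab k (S.U x)

/-- The composition `τ_{U^{k-1}(y)} ∘ ⋯ ∘ τ_{U(y)} ∘ τ_y`. -/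
def tauChain (S : YBSolution X) : ℕ → X → X → X
  | 0, _ => id
  | k + 1, y => S.tauChain k (S.U y) ∘ ⇑(S.τ y)

/-- The `k`-cabled tau maps:
`τ^{(k)}_y = T^{k-1} ∘ τ_{U^{k-1}(y)} ∘ ⋯ ∘ τ_{U(y)} ∘ τ_y ∘ T^{-(k-1)}`,
where `T^{-(k-1)} = U^{k-1}` since `U` is the inverse of `T`. -/
def tauCab (S : YBSolution X) (k : ℕ) (y : X) : X → X :=
  S.T^[k - 1] ∘ S.tauChain k y ∘ S.U^[k - 1]

/-- The `k`-cabled solution `r^{(k)}(x,y) = (σ^{(k)}_x(y), τ^{(k)}_y(x))`. -/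
def rCab (S : YBSolution X) (k : ℕ) : X × X → X × X :=
  fun p => (S.sigmaCab k p.1 p.2, S.tauCab k p.2 p.1)

/-- The permutation group `𝒢(X,r)`, generated by the `σ_x`. -/
def G (S : YBSolution X) : Subgroup (Equiv.Perm X) :=
  Subgroup.closure (Set.range S.σ)

/-- The permutation group `𝒢(X,r^{(k)})` of the `k`-cabled solution,
generated by the `σ^{(k)}_x`. -/
def Gcab (S : YBSolution X) (k : ℕ) : Subgroup (Equiv.Perm X) :=
  Subgroup.closure {g : Equiv.Perm X | ∃ x : X, ⇑g = S.sigmaCab k x}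

/-- The orbit of `x` under the diagonal map `T`. -/
def Torbit (S : YBSolution X) (x : X) : Set X := {y | ∃ n : ℕ, S.T^[n] x = y}

/-- The orbit of `x` under `𝒢(X,r)`. -/
def Gorbit (S : YBSolution X) (x : X) : Set X := {y | ∃ g ∈ S.G, g x = y}

/-- The orbit of `x` under `𝒢(X,r^{(k)})`. -/
def GcabOrbit (S : YBSolution X) (k : ℕ) (x : X) : Set X :=
  {y | ∃ g ∈ S.Gcab k, g x = y}

/-- A solution is indecomposable when `𝒢(X,r)` acts transitively on `X`. -/
def IsIndecomposable (S : YBSolution X) : Prop := ∀ x y : X, ∃ g ∈ S.G, g x = y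

end YBSolution

/-! ### Auxiliary lemmas for the cabling theorem -/

section GenBraid

/-- From involutivity (first component) and the first braid component, the second
braid component follows, for arbitrary families of injective maps. -/
lemma genB2 {s' t' : X → X → X} (inj : ∀ x, Function.Injective (s' x))
    (i1' : ∀ x y, s' (s' x y) (t' y x) = x)
    (b1' : ∀ x y z, s' (s' x y) (s' (t' y x) z) = s' x (s' y z)) :
    ∀ x y z, t' (s' (t' y x) z) (s' x y) = s' (t' (s' y z) x) (t' z y) := by
  intro x y z
  have hA : s' (s' x y) (s' (t' y x) z) = s' x (s' y z) := b1' x y z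
  have h1 : s' (s' x (s' y z)) (t' (s' (t' y x) z) (s' x y)) = s' x y := by
    have := i1' (s' x y) (s' (t' y x) z)
    rwa [hA] at this
  have h2 : s' (s' x (s' y z)) (s' (t' (s' y z) x) (t' z y)) = s' x y := by
    have hb := b1' x (s' y z) (t' z y)
    rwa [i1' y z] at hb
  exact inj _ (h1.trans h2.symm)

/-- From involutivity (first component) and the first braid component, the third
braid component follows. -/
lemma genB3 {s' t' : X → X → X} (inj : ∀ x, Function.Injective (s' x))
    (i1' : ∀ x y, s' (s' x y) (t' y x) = x)
    (b1' : ∀ x y z, s' (s' x y) (s' (t' y x) z) = s' x (s' y z)) :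
    ∀ x y z, t' z (t' y x) = t' (t' z y) (t' (s' y z) x) := by
  intro x y z
  set v := t' y x with hv
  set u := s' x y with hu
  set p := s' y z with hp
  set m := t' p x with hm
  set q := t' z y with hq
  set n := s' v z with hn
  have hA : s' u n = s' x p := b1' x y z
  have hb2 : t' n u = s' m q := genB2 inj i1' b1' x y z
  have e1 : s' n (t' z v) = v := i1' v z
  have e2 : s' (s' m q) (t' q m) = m := i1' m q
  have e3 : s' (s' x p) m = x := i1' x p
  have key : s' (s' x p) (s' (t' n u) (t' q m)) = s' u (s' n (t' q m)) := by
    have := b1' u n (t' q m); rwa [hA] at this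
  have e4 : s' u (s' n (t' q m)) = x := by
    rw [← key, hb2, e2, e3]
  have e5 : s' u v = x := i1' x y
  have e6 : s' n (t' q m) = v := inj u (e4.trans e5.symm)
  exact inj n (e1.trans e6.symm)

end GenBraid

namespace YBSolution

variable [Fintype X] (S : YBSolution X)

lemma sigmaCab_zero (x y : X) : S.sigmaCab 0 x y = y := rfl

lemma sigmaCab_succ (k : ℕ) (x y : X) :
    S.sigmaCab (k + 1) x y = S.σ x (S.sigmaCab k (S.U x) y) := rfl

lemma tauChain_zero (y x : X) : S.tauChain 0 y x = x := rfl

lemma tauChain_succ (k : ℕ) (y x : X) :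
    S.tauChain (k + 1) y x = S.tauChain k (S.U y) (S.τ y x) := rfl

lemma i1 (x y : X) : S.σ (S.σ x y) (S.τ y x) = x := by
  have h := S.involutive (x, y)
  rw [Prod.ext_iff] at h
  exact h.1

lemma i2 (x y : X) : S.τ (S.τ y x) (S.σ x y) = y := by
  have h := S.involutive (x, y)
  rw [Prod.ext_iff] at h
  exact h.2

lemma braid3 (x y z : X) :
    (S.σ (S.σ x y) (S.σ (S.τ y x) z) = S.σ x (S.σ y z)) ∧
    (S.τ (S.σ (S.τ y x) z) (S.σ x y) = S.σ (S.τ (S.σ y z) x) (S.τ z y)) ∧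
    (S.τ z (S.τ y x) = S.τ (S.τ z y) (S.τ (S.σ y z) x)) := by
  have h := congrFun S.braid (x, y, z)
  simp only [Function.comp_apply, lmap, rmap, ybR, Prod.ext_iff] at h
  exact ⟨h.1, h.2.1, h.2.2⟩

lemma b1 (x y z : X) : S.σ (S.σ x y) (S.σ (S.τ y x) z) = S.σ x (S.σ y z) :=
  (S.braid3 x y z).1

lemma b3 (x y z : X) : S.τ z (S.τ y x) = S.τ (S.τ z y) (S.τ (S.σ y z) x) :=
  (S.braid3 x y z).2.2

lemma sigma_U (x : X) : S.σ x (S.U x) = x := Equiv.apply_symm_apply _ _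

lemma tau_T (x : X) : S.τ x (S.T x) = x := Equiv.apply_symm_apply _ _

lemma tau_U (x : X) : S.τ (S.U x) x = S.U x := by
  have h := S.i1 x (S.U x)
  rw [S.sigma_U] at h
  have := S.sigma_U x
  exact (S.σ x).injective (h.trans (S.sigma_U x).symm)

lemma T_U (x : X) : S.T (S.U x) = x := by
  have h := S.tau_U x
  unfold T
  exact (S.τ (S.U x)).injective (by rw [Equiv.apply_symm_apply, h])

lemma sigma_T (y : X) : S.σ (S.T y) y = S.T y := by
  have h := S.i2 (S.T y) y
  rw [S.tau_T] at h
  exact (S.τ y).injective (h.trans (S.tau_T y).symm)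

lemma U_T (x : X) : S.U (S.T x) = x := by
  have h := S.sigma_T x
  unfold U
  exact (S.σ (S.T x)).injective (by rw [Equiv.apply_symm_apply, h])

lemma L1 (x y : X) : S.σ (S.τ y x) (S.U y) = S.U (S.σ x y) := by
  have h := S.b1 x y (S.U y)
  rw [S.sigma_U] at h
  have h2 : S.σ (S.σ x y) (S.U (S.σ x y)) = S.σ x y := S.sigma_U _
  exact (S.σ (S.σ x y)).injective (h.trans h2.symm)

lemma L2 (a b : X) : S.τ (S.σ b a) (S.T b) = S.T (S.τ a b) := by
  have h := S.b3 (S.T b) b a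
  rw [S.tau_T] at h
  have h2 : S.τ (S.τ a b) (S.T (S.τ a b)) = S.τ a b := S.tau_T _
  exact ((S.τ (S.τ a b)).injective (h2.trans h)).symm

lemma L2u (w x : X) : S.U (S.τ (S.σ (S.U x) w) x) = S.τ w (S.U x) := by
  have h := S.L2 w (S.U x)
  rw [S.T_U] at h
  rw [h, S.U_T]

/-- `τ*_{a+1,y}(x)`: the head of the left block after crossing the block
`(x, Ux, …, Uᵃx)` past the single element `y`. -/
def tauStar (a : ℕ) (y x : X) : X := S.τ (S.sigmaCab a (S.U x) y) x

/-- `θ`: the head of the left block after crossing the block `(x, Ux, …, Uᵃx)`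
past the block `(y, Uy, …, U^{b-1}y)`. -/
def theta (a b : ℕ) (y x : X) : X := S.tauChain b (S.sigmaCab a (S.U x) y) x

lemma Ustep (a : ℕ) (y x : X) :
    S.U (S.tauStar (a + 1) y x) = S.tauStar a y (S.U x) := by
  unfold tauStar
  rw [S.sigmaCab_succ]
  exact S.L2u _ _

lemma K1 (a : ℕ) : ∀ x y : X,
    S.sigmaCab (a + 1) (S.tauStar a y x) (S.U y) = S.U (S.sigmaCab (a + 1) x y) := by
  induction a with
  | zero =>
      intro x y
      simp only [sigmaCab_succ, sigmaCab_zero, tauStar]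
      exact S.L1 x y
  | succ a ih =>
      intro x y
      have hx1 : S.U (S.tauStar (a + 1) y x) = S.tauStar a y (S.U x) := S.Ustep a y x
      rw [S.sigmaCab_succ, hx1, ih (S.U x) y]
      have : S.tauStar (a + 1) y x = S.τ (S.sigmaCab (a + 1) (S.U x) y) x := rfl
      rw [this, S.L1 x (S.sigmaCab (a + 1) (S.U x) y), ← S.sigmaCab_succ]

lemma K3 (a b : ℕ) (y x : X) :
    S.theta a (b + 1) y x = S.theta a b (S.U y) (S.tauStar a y x) := by
  unfold theta
  rw [S.tauChain_succ]
  have key : S.sigmaCab a (S.U (S.tauStar a y x)) (S.U y) = S.U (S.sigmaCab a (S.U x) y) := by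
    cases a with
    | zero => simp [sigmaCab_zero]
    | succ a' =>
        rw [S.Ustep a' y x]
        exact S.K1 a' (S.U x) y
  rw [key]
  rfl

lemma K10a (a : ℕ) (x y : X) :
    S.σ (S.sigmaCab (a + 1) x y) (S.tauStar a y x) = x := by
  rw [S.sigmaCab_succ]
  exact S.i1 x (S.sigmaCab a (S.U x) y)

lemma K10b (a : ℕ) : ∀ x y : X,
    S.tauChain (a + 1) (S.tauStar a y x) (S.sigmaCab (a + 1) x y) = y := by
  induction a with
  | zero =>
      intro x y
      simp only [tauChain_succ, tauChain_zero, tauStar, sigmaCab_zero, sigmaCab_succ]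
      exact S.i2 x y
  | succ a ih =>
      intro x y
      have hv : S.tauStar (a + 1) y x = S.τ (S.sigmaCab (a + 1) (S.U x) y) x := rfl
      rw [tauChain_succ, S.Ustep a y x]
      have h2 : S.τ (S.tauStar (a + 1) y x) (S.sigmaCab (a + 2) x y)
          = S.sigmaCab (a + 1) (S.U x) y := by
        rw [hv, S.sigmaCab_succ]
        exact S.i2 x (S.sigmaCab (a + 1) (S.U x) y)
      rw [h2]
      exact ih (S.U x) y

lemma Tstep (k : ℕ) : ∀ w x : X,
    S.tauChain k (S.σ (S.U x) w) x = S.T (S.tauChain k w (S.U x)) := by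
  induction k with
  | zero =>
      intro w x
      simp only [tauChain_zero]
      exact (S.T_U x).symm
  | succ k ih =>
      intro w x
      rw [S.tauChain_succ, S.tauChain_succ]
      have h1 : S.U (S.σ (S.U x) w) = S.σ (S.τ w (S.U x)) (S.U w) := (S.L1 (S.U x) w).symm
      have h2 : S.τ (S.σ (S.U x) w) x = S.T (S.τ w (S.U x)) := by
        have := S.L2 w (S.U x)
        rwa [S.T_U] at this
      rw [h1, h2]
      have h3 : S.τ w (S.U x) = S.U (S.T (S.τ w (S.U x))) := (S.U_T _).symm
      calc S.tauChain k (S.σ (S.τ w (S.U x)) (S.U w)) (S.T (S.τ w (S.U x)))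
          = S.tauChain k (S.σ (S.U (S.T (S.τ w (S.U x)))) (S.U w)) (S.T (S.τ w (S.U x))) := by
            rw [← h3]
        _ = S.T (S.tauChain k (S.U w) (S.U (S.T (S.τ w (S.U x))))) := ih (S.U w) _
        _ = S.T (S.tauChain k (S.U w) (S.τ w (S.U x))) := by rw [← h3]

lemma H1' (j : ℕ) : ∀ (k : ℕ) (x y : X),
    S.tauChain k (S.sigmaCab j (S.U x) y) x = S.T^[j] (S.tauChain k y (S.U^[j] x)) := by
  induction j with
  | zero => intro k x y; simp [sigmaCab_zero]
  | succ j ih =>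
      intro k x y
      rw [S.sigmaCab_succ, S.Tstep k _ x, ih k (S.U x) y,
        Function.iterate_succ_apply' S.T, Function.iterate_succ_apply S.U]

lemma H1 (a : ℕ) (y x : X) : S.tauCab (a + 1) y x = S.theta a (a + 1) y x := by
  unfold tauCab theta
  simp only [Nat.add_sub_cancel, Function.comp_apply]
  exact (S.H1' a (a + 1) x y).symm

lemma K8 (b : ℕ) : ∀ (a : ℕ) (x y : X),
    S.sigmaCab b (S.sigmaCab (a + 1) x y) (S.theta a b y x) = x := by
  induction b with
  | zero => intro a x y; simp [sigmaCab_zero, theta, tauChain_zero]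
  | succ b ih =>
      intro a x y
      rw [S.sigmaCab_succ, S.K3, S.K1 a x y |>.symm, ih a (S.tauStar a y x) (S.U y)]
      exact S.K10a a x y

lemma K9 (b : ℕ) : ∀ (a : ℕ) (x y : X),
    S.theta b (a + 1) (S.theta a (b + 1) y x) (S.sigmaCab (a + 1) x y) = y := by
  induction b with
  | zero =>
      intro a x y
      have h : S.theta a 1 y x = S.tauStar a y x := rfl
      rw [h]
      unfold theta
      simp only [sigmaCab_zero]
      exact S.K10b a x y
  | succ b ih =>
      intro a x y
      set u := S.sigmaCab (a + 1) x y with hu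
      set c := S.theta a (b + 1 + 1) y x with hc
      have houter : S.theta (b + 1) (a + 1) c u
          = S.tauChain (a + 1) (S.σ (S.U u) (S.sigmaCab b (S.U (S.U u)) c)) u := rfl
      rw [houter, S.Tstep (a + 1) _ u]
      have hUu : S.U u = S.sigmaCab (a + 1) (S.tauStar a y x) (S.U y) := (S.K1 a x y).symm
      have hchi : c = S.theta a (b + 1) (S.U y) (S.tauStar a y x) := S.K3 a (b + 1) y x
      have hthis : S.tauChain (a + 1) (S.sigmaCab b (S.U (S.U u)) c) (S.U u) = S.U y := by
        rw [hchi, hUu]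
        exact ih a (S.tauStar a y x) (S.U y)
      rw [hthis, S.T_U]

lemma K6 (a : ℕ) : ∀ x y z : X,
    S.σ (S.sigmaCab (a + 1) x y) (S.sigmaCab (a + 1) (S.tauStar a y x) z)
      = S.sigmaCab (a + 1) x (S.σ y z) := by
  induction a with
  | zero =>
      intro x y z
      simp only [sigmaCab_succ, sigmaCab_zero, tauStar]
      exact S.b1 x y z
  | succ a ih =>
      intro x y z
      have hv : S.tauStar (a + 1) y x = S.τ (S.sigmaCab (a + 1) (S.U x) y) x := rfl
      set w := S.sigmaCab (a + 1) (S.U x) y with hw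
      rw [show S.sigmaCab (a + 1 + 1) x y = S.σ x w from rfl]
      rw [show S.sigmaCab (a + 1 + 1) (S.tauStar (a + 1) y x) z
            = S.σ (S.tauStar (a + 1) y x)
              (S.sigmaCab (a + 1) (S.U (S.tauStar (a + 1) y x)) z) from rfl]
      rw [S.Ustep a y x, hv]
      rw [S.b1 x w (S.sigmaCab (a + 1) (S.tauStar a y (S.U x)) z)]
      rw [hw, ih (S.U x) y z]
      rfl

lemma K5 (b : ℕ) : ∀ (a : ℕ) (x y z : X),
    S.sigmaCab b (S.sigmaCab (a + 1) x y) (S.sigmaCab (a + 1) (S.theta a b y x) z)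
      = S.sigmaCab (a + 1) x (S.sigmaCab b y z) := by
  induction b with
  | zero =>
      intro a x y z
      simp only [sigmaCab_zero, theta, tauChain_zero]
  | succ b ih =>
      intro a x y z
      have rhs : S.sigmaCab (a + 1) x (S.sigmaCab (b + 1) y z)
          = S.σ (S.sigmaCab (a + 1) x y)
              (S.sigmaCab (a + 1) (S.tauStar a y x) (S.sigmaCab b (S.U y) z)) := by
        rw [S.sigmaCab_succ b y z, ← S.K6 a x y (S.sigmaCab b (S.U y) z)]
      rw [rhs, ← ih a (S.tauStar a y x) (S.U y) z, ← S.K3 a b y x, S.K1 a x y]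
      rfl

lemma sigmaCab_bijective (k : ℕ) : ∀ x : X, Function.Bijective (S.sigmaCab k x) := by
  induction k with
  | zero => intro x; exact Function.bijective_id
  | succ k ih =>
      intro x
      exact (S.σ x).bijective.comp (ih (S.U x))

lemma tauChain_bijective (k : ℕ) : ∀ y : X, Function.Bijective (S.tauChain k y) := by
  induction k with
  | zero => intro y; exact Function.bijective_id
  | succ k ih =>
      intro y
      exact (ih (S.U y)).comp (S.τ y).bijective

lemma T_bijective : Function.Bijective S.T :=
  Function.bijective_iff_has_inverse.mpr ⟨S.U, S.U_T, S.T_U⟩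

lemma U_bijective : Function.Bijective S.U :=
  Function.bijective_iff_has_inverse.mpr ⟨S.T, S.T_U, S.U_T⟩

lemma tauCab_bijective (k : ℕ) (y : X) : Function.Bijective (S.tauCab k y) := by
  unfold tauCab
  exact ((S.T_bijective.iterate (k - 1)).comp (S.tauChain_bijective k y)).comp
    (S.U_bijective.iterate (k - 1))

end YBSolution

/-- the `k`-cabled data again form a solution on `X`:
the cabled sigma and tau maps are bijections, and `r^{(k)}` is involutive and
satisfies the braid relation. -/
theorem cabled_is_solution [Fintype X] (S : YBSolution X) (k : ℕ) (hk : 0 < k) :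
    (∀ x : X, Function.Bijective (S.sigmaCab k x)) ∧
    (∀ x : X, Function.Bijective (S.tauCab k x)) ∧
    (∀ p : X × X, S.rCab k (S.rCab k p) = p) ∧
    (lmap (S.rCab k) ∘ rmap (S.rCab k) ∘ lmap (S.rCab k)
      = rmap (S.rCab k) ∘ lmap (S.rCab k) ∘ rmap (S.rCab k)) := by
  obtain ⟨a, rfl⟩ : ∃ a, k = a + 1 := ⟨k - 1, (Nat.succ_pred_eq_of_pos hk).symm⟩
  have hi1 : ∀ x y : X, S.sigmaCab (a+1) (S.sigmaCab (a+1) x y) (S.tauCab (a+1) y x) = x := by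
    intro x y; rw [S.H1]; exact S.K8 (a+1) a x y
  have hb1 : ∀ x y z : X,
      S.sigmaCab (a+1) (S.sigmaCab (a+1) x y)
        (S.sigmaCab (a+1) (S.tauCab (a+1) y x) z) = S.sigmaCab (a+1) x (S.sigmaCab (a+1) y z) := by
    intro x y z; rw [S.H1]; exact S.K5 (a+1) a x y z
  have hinj : ∀ x : X, Function.Injective (S.sigmaCab (a+1) x) :=
    fun x => (S.sigmaCab_bijective (a+1) x).1
  refine ⟨S.sigmaCab_bijective (a+1), S.tauCab_bijective (a+1), ?_, ?_⟩
  · rintro ⟨x, y⟩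
    unfold YBSolution.rCab
    refine Prod.ext ?_ ?_
    · exact hi1 x y
    · show S.tauCab (a+1) (S.tauCab (a+1) y x) (S.sigmaCab (a+1) x y) = y
      rw [S.H1 a (S.tauCab (a+1) y x), S.H1 a y x]
      exact S.K9 a a x y
  · have hb2 := genB2 hinj hi1 hb1
    have hb3 := genB3 hinj hi1 hb1
    funext p
    obtain ⟨x, y, z⟩ := p
    simp only [Function.comp_apply, lmap, rmap, YBSolution.rCab]
    exact Prod.ext (hb1 x y z) (Prod.ext (hb2 x y z) (hb3 x y z))
end

section
/- Let (X,r) be a solution. For each x ∈ X there exists a least positive integer l_x with π_{l_x}(x) = Id, and the Dehornoy class of (X,r) exists and equals the least common multiple of the numbers l_x over all x ∈ X. -/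
open Function

variable {X : Type*}

section Aux

variable [Fintype X] (S : YBSolution X)

lemma aux_T_U (x : X) : S.T (S.U x) = x := by
  have h := S.involutive (x, S.U x)
  simp only [ybR, YBSolution.U, Equiv.apply_symm_apply, Prod.mk.injEq] at h
  have h1 : S.τ ((S.σ x).symm x) x = (S.σ x).symm x :=
    (Equiv.injective (S.σ x)) (by rw [Equiv.apply_symm_apply]; exact h.1)
  show (S.τ (S.U x)).symm (S.U x) = x
  simp only [YBSolution.U]
  rw [Equiv.symm_apply_eq]
  exact h1.symm

lemma aux_U_inj : Function.Injective S.U :=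
  Function.LeftInverse.injective (aux_T_U S)

lemma aux_sigmaCab_add (k l : ℕ) (x : X) :
    S.sigmaCab (k + l) x = S.sigmaCab k x ∘ S.sigmaCab l (S.U^[k] x) := by
  induction k generalizing x with
  | zero => simp [YBSolution.sigmaCab]
  | succ k ih =>
      have : k + 1 + l = (k + l) + 1 := by omega
      rw [this]
      show (⇑(S.σ x)) ∘ S.sigmaCab (k + l) (S.U x) = _
      rw [ih, Function.iterate_succ_apply]
      rfl

lemma aux_sigmaCab_inj (k : ℕ) (x : X) : Function.Injective (S.sigmaCab k x) := by
  induction k generalizing x with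
  | zero => exact fun a b h => h
  | succ k ih => exact (Equiv.injective (S.σ x)).comp (ih (S.U x))

lemma aux_sigmaCab_fix (k : ℕ) (x : X) : S.sigmaCab k x (S.U^[k] x) = x := by
  induction k generalizing x with
  | zero => rfl
  | succ k ih =>
      show S.σ x (S.sigmaCab k (S.U x) (S.U^[k+1] x)) = x
      rw [Function.iterate_succ_apply, ih]
      exact Equiv.apply_symm_apply _ _

lemma aux_U_fix {k : ℕ} {x : X} (h : S.sigmaCab k x = id) : S.U^[k] x = x := by
  have := aux_sigmaCab_fix S k x
  rwa [h] at this

lemma aux_closure {a b : ℕ} {x : X} (ha : S.sigmaCab a x = id)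
    (hb : S.sigmaCab b x = id) : S.sigmaCab (a + b) x = id := by
  rw [aux_sigmaCab_add, aux_U_fix S ha, ha, hb]; rfl

lemma aux_cancel {a b : ℕ} {x : X} (ha : S.sigmaCab a x = id)
    (hab : S.sigmaCab (a + b) x = id) : S.sigmaCab b x = id := by
  rw [aux_sigmaCab_add, aux_U_fix S ha, ha] at hab
  simpa using hab

lemma aux_exists_pos (x : X) : ∃ l : ℕ, 0 < l ∧ S.sigmaCab l x = id := by
  -- find a period p of U at x
  obtain ⟨a, b, hne, heq⟩ :=
    Finite.exists_ne_map_eq_of_infinite (fun n : ℕ => S.U^[n] x)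
  wlog hab : a < b generalizing a b
  · exact this b a hne.symm heq.symm (by omega)
  have hUinj : Function.Injective (S.U^[a]) := (aux_U_inj S).iterate a
  have hp : S.U^[b - a] x = x := by
    apply hUinj
    rw [← Function.iterate_add_apply]
    have : a + (b - a) = b := by omega
    rw [this]; exact heq.symm
  set p := b - a with hpdef
  have hppos : 0 < p := by omega
  have hnp : ∀ n : ℕ, S.U^[n * p] x = x := by
    intro n
    induction n with
    | zero => simp
    | succ n ih =>
        have : (n + 1) * p = p + n * p := by ring
        rw [this, Function.iterate_add_apply, ih, hp]
  -- pigeonhole on sigmaCab (n*p) x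
  obtain ⟨c, d, hcd, heq2⟩ :=
    Finite.exists_ne_map_eq_of_infinite (fun n : ℕ => S.sigmaCab (n * p) x)
  wlog hcd' : c < d generalizing c d
  · exact this d c hcd.symm heq2.symm (by omega)
  refine ⟨(d - c) * p, Nat.mul_pos (by omega) hppos, ?_⟩
  have hsplit : d * p = c * p + (d - c) * p := by
    have : c * p + (d - c) * p = d * p := by
      rw [← Nat.add_mul]; congr 1; omega
    omega
  have := aux_sigmaCab_add S (c * p) ((d - c) * p) x
  rw [← hsplit, hnp c] at this
  have heq3 : S.sigmaCab (c * p) x ∘ S.sigmaCab ((d - c) * p) x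
      = S.sigmaCab (c * p) x ∘ id := by
    rw [Function.comp_id, ← this]
    exact heq2.symm
  funext y
  exact aux_sigmaCab_inj S (c * p) x (congrFun heq3 y)

lemma aux_dvd_iff {d : ℕ} {x : X}
    (hL : IsLeast {l : ℕ | 0 < l ∧ S.sigmaCab l x = id} d) (m : ℕ) :
    S.sigmaCab m x = id ↔ d ∣ m := by
  have hd : S.sigmaCab d x = id := hL.1.2
  have hdpos : 0 < d := hL.1.1
  have hmul : ∀ q : ℕ, S.sigmaCab (d * q) x = id := by
    intro q
    induction q with
    | zero => rfl
    | succ q ih =>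
        have : d * (q + 1) = d * q + d := by ring
        rw [this]
        exact aux_closure S ih hd
  constructor
  · intro hm
    have hdecomp : m = d * (m / d) + m % d := (Nat.div_add_mod m d).symm
    have hrem : S.sigmaCab (m % d) x = id := by
      apply aux_cancel S (hmul (m / d))
      rwa [← hdecomp]
    by_contra hnd
    have hrpos : 0 < m % d := by
      rcases Nat.eq_zero_or_pos (m % d) with h0 | h0
      · exact absurd (Nat.dvd_of_mod_eq_zero h0) hnd
      · exact h0
    have := hL.2 ⟨hrpos, hrem⟩
    have := Nat.mod_lt m hdpos
    omega
  · rintro ⟨q, rfl⟩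
    exact hmul q

end Aux

/-- for each `x` there is a least positive `l` with `π_l(x) = Id`
(`π_l = sigmaCab l`), and the Dehornoy class exists and equals the lcm of these
least integers. -/
theorem dehornoy_class_lcm [Fintype X] (S : YBSolution X) :
    (∀ x : X, ∃ l : ℕ, IsLeast {l : ℕ | 0 < l ∧ S.sigmaCab l x = id} l) ∧
    ∀ L : X → ℕ, (∀ x : X, IsLeast {l : ℕ | 0 < l ∧ S.sigmaCab l x = id} (L x)) →
      IsLeast {m : ℕ | 0 < m ∧ ∀ x : X, S.sigmaCab m x = id}
        (Finset.univ.lcm L) := by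
  constructor
  · intro x
    obtain ⟨l, hl⟩ := aux_exists_pos S x
    have hne : {l : ℕ | 0 < l ∧ S.sigmaCab l x = id}.Nonempty := ⟨l, hl⟩
    exact ⟨sInf _, Nat.sInf_mem hne, fun b hb => Nat.sInf_le hb⟩
  · intro L hL
    have hpos : ∀ x : X, 0 < L x := fun x => (hL x).1.1
    have hlcmpos : 0 < Finset.univ.lcm L := by
      apply Nat.pos_of_ne_zero
      intro h0
      rw [Finset.lcm_eq_zero_iff] at h0
      obtain ⟨x, -, hx⟩ := h0
      exact (hpos x).ne' hx
    constructor
    · refine ⟨hlcmpos, fun x => ?_⟩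
      exact (aux_dvd_iff S (hL x) _).mpr (Finset.dvd_lcm (Finset.mem_univ x))
    · rintro m ⟨hmpos, hm⟩
      have hdvd : Finset.univ.lcm L ∣ m :=
        Finset.lcm_dvd fun x _ => (aux_dvd_iff S (hL x) m).mp (hm x)
      exact Nat.le_of_dvd hmpos hdvd
end

section
/- Let (X,r) be a solution and k a positive integer. If x, x' ∈ X satisfy σ_x = σ_{x'}, then σ^{(k)}_x = σ^{(k)}_{x'}. Consequently, if (X,r) is retractable (i.e. σ_x = σ_{x'} for some x ≠ x'), then so is its k-cabling (X, r^{(k)}). -/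
open Function

variable {X : Type*}

section Aux

variable [Fintype X] (S : YBSolution X)

lemma yb_inv1 (x y : X) : S.σ (S.σ x y) (S.τ y x) = x :=
  congrArg Prod.fst (S.involutive (x, y))

lemma yb_braid1 (x y z : X) :
    S.σ (S.σ x y) (S.σ (S.τ y x) z) = S.σ x (S.σ y z) :=
  congrArg (fun p => p.1) (congrFun S.braid (x, y, z))

lemma sigma_U_congr {x x' : X} (h : S.σ x = S.σ x') :
    S.σ (S.U x) = S.σ (S.U x') := by
  have hx' : S.σ x ((S.σ x).symm x') = x' := (S.σ x).apply_symm_apply x'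
  have htau : S.τ ((S.σ x).symm x') x = S.U x := by
    have h1 := yb_inv1 S x ((S.σ x).symm x')
    rw [hx'] at h1
    have : S.τ ((S.σ x).symm x') x = (S.σ x').symm x :=
      (Equiv.eq_symm_apply _).mpr h1
    rw [this, ← h, YBSolution.U]
  ext z
  have hb := yb_braid1 S x ((S.σ x).symm x') z
  rw [hx', htau] at hb
  have hUx' : (S.σ x).symm x' = S.U x' := by rw [h, YBSolution.U]
  rw [hUx'] at hb
  have := hb
  rw [← h] at this
  exact (S.σ x).injective this

lemma sigmaCab_congr {x x' : X} (h : S.σ x = S.σ x') :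
    ∀ k, S.sigmaCab k x = S.sigmaCab k x' := by
  intro k
  induction k generalizing x x' h with
  | zero => rfl
  | succ n ih =>
    show ⇑(S.σ x) ∘ S.sigmaCab n (S.U x) = ⇑(S.σ x') ∘ S.sigmaCab n (S.U x')
    rw [h, ih (sigma_U_congr S h)]

end Aux

/-- `σ_x = σ_{x'}` implies `σ^{(k)}_x = σ^{(k)}_{x'}`; consequently
a retractable solution has retractable cablings. -/
theorem cabling_retractable [Fintype X] (S : YBSolution X) (k : ℕ) (hk : 0 < k) :
    (∀ x x' : X, S.σ x = S.σ x' → S.sigmaCab k x = S.sigmaCab k x') ∧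
    ((∃ x x' : X, x ≠ x' ∧ S.σ x = S.σ x') →
      ∃ x x' : X, x ≠ x' ∧ S.sigmaCab k x = S.sigmaCab k x') := by
  refine ⟨fun x x' h => sigmaCab_congr S h k, fun ⟨x, x', hne, h⟩ =>
    ⟨x, x', hne, sigmaCab_congr S h k⟩⟩
end
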